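/- Let f be a real trigonometric polynomial of degree at most K on the periodic square [0,L]² (i.e., f ∈ P_K), sampled at the uniform N×N grid with N = 2K+1, giving grid values f_{i,j}. Then the discrete ℓ⁴ norm satisfies ‖f‖₄ ≤ √2 ‖f‖_{L⁴}, where ‖f‖₄⁴ = h²Σ_{i,j}|f_{i,j}|⁴ (h = L/N) and ‖f‖_{L⁴} is the continuous L⁴ norm of f on [0,L]². -/

import Mathlib

open Finset

section AuxLemmasForL4
open Complex

noncomputable def EE (L : ℝ) (p : ℤ) (x : ℝ) : ℂ :=
  Complex.exp (2 * Real.pi * Complex.I * p * x / L)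

lemma EE_mul (L : ℝ) (p p' : ℤ) (x : ℝ) : EE L p x * EE L p' x = EE L (p + p') x := by
  rw [EE, EE, EE, ← Complex.exp_add]
  congr 1
  push_cast
  ring

lemma EE_conj (L : ℝ) (p : ℤ) (x : ℝ) : (starRingEnd ℂ) (EE L p x) = EE L (-p) x := by
  rw [EE, EE, ← Complex.exp_conj]
  congr 1
  simp [map_div₀, map_ofNat]

-- index sets
noncomputable def sK (K : ℕ) : Finset ℤ := Icc (-(K:ℤ)) K
noncomputable def tK (K : ℕ) : Finset ℤ := Icc (-(2*K:ℤ)) (2*K)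
noncomputable def BK (K : ℕ) : Finset (ℤ×ℤ) := (sK K) ×ˢ (sK K)
noncomputable def AK (K : ℕ) : Finset (ℤ×ℤ) := (tK K) ×ˢ (tK K)

noncomputable def Gc (K : ℕ) (c : ℤ → ℤ → ℂ) (z : ℤ×ℤ) : ℂ :=
  ∑ w ∈ BK K, if z.1 - w.1 ∈ sK K ∧ z.2 - w.2 ∈ sK K
    then c w.1 w.2 * c (z.1-w.1) (z.2-w.2) else 0

noncomputable def gg (K : ℕ) (L : ℝ) (c : ℤ → ℤ → ℂ) (x y : ℝ) : ℂ :=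
  ∑ z ∈ AK K, Gc K c z * EE L z.1 x * EE L z.2 y

lemma shift2_sum (K : ℕ) (w : ℤ × ℤ) (hw : w ∈ BK K) (F : ℤ × ℤ → ℂ) :
    ∑ z ∈ AK K,
      (if z.1 - w.1 ∈ sK K ∧ z.2 - w.2 ∈ sK K then F (z.1 - w.1, z.2 - w.2) else 0)
    = ∑ w' ∈ BK K, F w' := by
  simp only [BK, AK, sK, tK, mem_product, mem_Icc] at *
  rw [← Finset.sum_filter]
  apply Finset.sum_nbij' (i := fun z => (z.1 - w.1, z.2 - w.2)) (j := fun w' => (w'.1 + w.1, w'.2 + w.2))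
  · intro z hz
    simp only [mem_filter, mem_product, mem_Icc] at hz
    simp only [mem_product, mem_Icc]
    omega
  · intro w' hw'
    simp only [mem_product, mem_Icc] at hw'
    simp only [mem_filter, mem_product, mem_Icc]
    omega
  · intro z hz; simp
  · intro w' hw'; simp
  · intro z hz; rfl

lemma sq_eq_gg (K : ℕ) (L : ℝ) (c : ℤ → ℤ → ℂ) (f : ℝ → ℝ → ℂ)
    (hf : ∀ x y : ℝ, f x y =
      ∑ ℓ ∈ Finset.Icc (-(K:ℤ)) K, ∑ m ∈ Finset.Icc (-(K:ℤ)) K,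
        c ℓ m * Complex.exp (2 * Real.pi * Complex.I * (ℓ * x + m * y) / L))
    (x y : ℝ) : f x y ^ 2 = gg K L c x y := by
  have hf' : f x y = ∑ w ∈ BK K, c w.1 w.2 * (EE L w.1 x * EE L w.2 y) := by
    rw [hf, BK, sK, ← Finset.sum_product']
    apply Finset.sum_congr rfl
    intro w _
    congr 1
    rw [EE, EE, ← Complex.exp_add]
    congr 1
    push_cast
    ring
  rw [hf', sq, Finset.sum_mul_sum]
  rw [gg]
  have hexp : ∀ z ∈ AK K, Gc K c z * EE L z.1 x * EE L z.2 y
      = ∑ w ∈ BK K, (if z.1 - w.1 ∈ sK K ∧ z.2 - w.2 ∈ sK K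
          then c w.1 w.2 * c (z.1-w.1) (z.2-w.2) else 0) * (EE L z.1 x * EE L z.2 y) := by
    intro z _
    rw [Gc, Finset.sum_mul, Finset.sum_mul]
    apply Finset.sum_congr rfl
    intro w _
    split <;> simp [mul_assoc]
  rw [Finset.sum_congr rfl hexp, Finset.sum_comm (s := AK K) (t := BK K)]
  apply Finset.sum_congr rfl
  intro w hw
  have hstep : ∀ z ∈ AK K,
      (if z.1 - w.1 ∈ sK K ∧ z.2 - w.2 ∈ sK K
          then c w.1 w.2 * c (z.1-w.1) (z.2-w.2) else 0) * (EE L z.1 x * EE L z.2 y)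
      = (if z.1 - w.1 ∈ sK K ∧ z.2 - w.2 ∈ sK K
          then (fun w' : ℤ×ℤ => c w.1 w.2 * c w'.1 w'.2 * (EE L (w.1 + w'.1) x * EE L (w.2 + w'.2) y))
            (z.1 - w.1, z.2 - w.2) else 0) := by
    intro z _
    split
    · simp only []
      rw [show w.1 + (z.1 - w.1) = z.1 by ring, show w.2 + (z.2 - w.2) = z.2 by ring]
    · simp
  rw [Finset.sum_congr rfl hstep,
    shift2_sum K w hw (fun w' => c w.1 w.2 * c w'.1 w'.2 * (EE L (w.1 + w'.1) x * EE L (w.2 + w'.2) y))]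
  apply Finset.sum_congr rfl
  intro w' _
  rw [← EE_mul, ← EE_mul]
  ring

lemma EE_abs (L : ℝ) (p : ℤ) (x : ℝ) : ‖EE L p x‖ = 1 := by
  have : EE L p x = Complex.exp ((2 * Real.pi * p * x / L : ℝ) * Complex.I) := by
    rw [EE]; congr 1; push_cast; ring
  rw [this, Complex.norm_exp_ofReal_mul_I]

lemma EE_cont (L : ℝ) (p : ℤ) : Continuous (EE L p) := by
  unfold EE; fun_prop

lemma gg_mul_conj (K : ℕ) (L : ℝ) (c : ℤ → ℤ → ℂ) (x y : ℝ) :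
    gg K L c x y * (starRingEnd ℂ) (gg K L c x y)
    = ∑ z ∈ AK K, ∑ z' ∈ AK K,
        (Gc K c z * (starRingEnd ℂ) (Gc K c z') * EE L (z.1 - z'.1) x) * EE L (z.2 - z'.2) y := by
  rw [gg, map_sum, Finset.sum_mul_sum]
  apply Finset.sum_congr rfl
  intro z' _
  apply Finset.sum_congr rfl
  intro z _
  simp only [map_mul, EE_conj]
  rw [sub_eq_add_neg z'.1 z.1, sub_eq_add_neg z'.2 z.2, ← EE_mul, ← EE_mul]
  ring

lemma sum4_comm {α β γ δ M : Type*} [AddCommMonoid M] (I : Finset α) (J : Finset β)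
    (Z : Finset γ) (Z' : Finset δ) (F : α → β → γ → δ → M) :
    ∑ i ∈ I, ∑ j ∈ J, ∑ z ∈ Z, ∑ z' ∈ Z', F i j z z'
      = ∑ z ∈ Z, ∑ z' ∈ Z', ∑ i ∈ I, ∑ j ∈ J, F i j z z' := by
  have h1 : ∀ i, ∑ j ∈ J, ∑ z ∈ Z, ∑ z' ∈ Z', F i j z z'
      = ∑ z ∈ Z, ∑ j ∈ J, ∑ z' ∈ Z', F i j z z' := fun i => Finset.sum_comm
  simp only [h1]
  rw [Finset.sum_comm (s := I) (t := Z)]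
  apply Finset.sum_congr rfl
  intro z _
  have h2 : ∀ i, ∑ j ∈ J, ∑ z' ∈ Z', F i j z z'
      = ∑ z' ∈ Z', ∑ j ∈ J, F i j z z' := fun i => Finset.sum_comm
  simp only [h2]
  exact Finset.sum_comm

lemma EE_integral {L : ℝ} (hL : 0 < L) (d : ℤ) :
    ∫ y in (0:ℝ)..L, EE L d y = if d = 0 then (L : ℂ) else 0 := by
  rcases eq_or_ne d 0 with rfl | hd
  · simp [EE]
  · have hc : (2 * (Real.pi:ℂ) * Complex.I * d / L) ≠ 0 := by
      apply div_ne_zero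
      · simp [Real.pi_ne_zero, Complex.I_ne_zero, hd]
      · exact_mod_cast (Complex.ofReal_ne_zero.mpr hL.ne')
    have heq : ∀ y : ℝ, EE L d y = Complex.exp ((2 * (Real.pi:ℂ) * Complex.I * d / L) * y) := by
      intro y; rw [EE]; congr 1; ring
    simp only [heq]
    rw [integral_exp_mul_complex hc]
    have hLne : (L:ℂ) ≠ 0 := Complex.ofReal_ne_zero.mpr hL.ne'
    have h1 : (2 * (Real.pi:ℂ) * Complex.I * d / L) * (L:ℂ) = d * (2 * Real.pi * Complex.I) := by
      field_simp
    rw [h1]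
    simp [Complex.exp_int_mul_two_pi_mul_I, hd]

lemma cont_inner (K : ℕ) {L : ℝ} (hL : 0 < L) (c : ℤ → ℤ → ℂ) (x : ℝ) :
    ∫ y in (0:ℝ)..L, gg K L c x y * (starRingEnd ℂ) (gg K L c x y)
    = ∑ z ∈ AK K, ∑ z' ∈ AK K,
        (Gc K c z * (starRingEnd ℂ) (Gc K c z') * (if z.2 - z'.2 = 0 then (L:ℂ) else 0))
          * EE L (z.1 - z'.1) x := by
  simp only [gg_mul_conj]
  rw [intervalIntegral.integral_finset_sum]
  · apply Finset.sum_congr rfl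
    intro z _
    rw [intervalIntegral.integral_finset_sum]
    · apply Finset.sum_congr rfl
      intro z' _
      rw [intervalIntegral.integral_const_mul, EE_integral hL]
      ring
    · intro z' _
      exact (continuous_const.mul (EE_cont L _)).intervalIntegrable _ _
  · intro z _
    apply Continuous.intervalIntegrable
    apply continuous_finset_sum
    intro z' _
    exact continuous_const.mul (EE_cont L _)

lemma cont_identity (K : ℕ) {L : ℝ} (hL : 0 < L) (c : ℤ → ℤ → ℂ) :
    (∫ x in (0:ℝ)..L, ∫ y in (0:ℝ)..L, Complex.normSq (gg K L c x y))
    = L^2 * ∑ z ∈ AK K, Complex.normSq (Gc K c z) := by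
  have inner2 : ∀ x : ℝ, ((∫ y in (0:ℝ)..L, Complex.normSq (gg K L c x y) : ℝ) : ℂ)
      = ∑ z ∈ AK K, ∑ z' ∈ AK K,
        (Gc K c z * (starRingEnd ℂ) (Gc K c z') * (if z.2 - z'.2 = 0 then (L:ℂ) else 0))
          * EE L (z.1 - z'.1) x := by
    intro x
    rw [← cont_inner K hL c x, ← intervalIntegral.integral_ofReal]
    apply intervalIntegral.integral_congr
    intro y _
    exact (Complex.mul_conj _).symm
  have main : ((∫ x in (0:ℝ)..L, ∫ y in (0:ℝ)..L, Complex.normSq (gg K L c x y) : ℝ) : ℂ)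
      = ((L^2 * ∑ z ∈ AK K, Complex.normSq (Gc K c z) : ℝ) : ℂ) := by
    rw [← intervalIntegral.integral_ofReal]
    simp only [inner2]
    rw [intervalIntegral.integral_finset_sum]
    · have hz : ∀ z ∈ AK K,
          (∫ x in (0:ℝ)..L, ∑ z' ∈ AK K,
            (Gc K c z * (starRingEnd ℂ) (Gc K c z') * (if z.2 - z'.2 = 0 then (L:ℂ) else 0))
              * EE L (z.1 - z'.1) x)
          = ∑ z' ∈ AK K,
            (Gc K c z * (starRingEnd ℂ) (Gc K c z') * (if z.2 - z'.2 = 0 then (L:ℂ) else 0))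
              * (if z.1 - z'.1 = 0 then (L:ℂ) else 0) := by
        intro z _
        rw [intervalIntegral.integral_finset_sum]
        · apply Finset.sum_congr rfl
          intro z' _
          rw [intervalIntegral.integral_const_mul, EE_integral hL]
        · intro z' _
          exact (continuous_const.mul (EE_cont L _)).intervalIntegrable _ _
      rw [Finset.sum_congr rfl hz]
      have hcollapse : ∀ z ∈ AK K,
          (∑ z' ∈ AK K,
            (Gc K c z * (starRingEnd ℂ) (Gc K c z') * (if z.2 - z'.2 = 0 then (L:ℂ) else 0))
              * (if z.1 - z'.1 = 0 then (L:ℂ) else 0))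
          = ((Complex.normSq (Gc K c z) : ℝ) : ℂ) * (L:ℂ)^2 := by
        intro z hzmem
        rw [Finset.sum_eq_single z]
        · rw [sub_self, sub_self]
          simp [Complex.mul_conj]
          ring
        · intro z' _ hne
          by_cases h1 : z.1 - z'.1 = 0
          · have h2 : ¬ (z.2 - z'.2 = 0) := by
              intro h2
              apply hne
              have e1 : z'.1 = z.1 := by omega
              have e2 : z'.2 = z.2 := by omega
              exact Prod.ext e1 e2
            simp [h2]
          · simp [h1]
        · intro hz'
          exact absurd hzmem hz'
      rw [Finset.sum_congr rfl hcollapse]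
      push_cast
      rw [← Finset.sum_mul]
      ring
    · intro z _
      apply Continuous.intervalIntegrable
      apply continuous_finset_sum
      intro z' _
      exact (continuous_const.mul (EE_cont L _))
  exact_mod_cast main

lemma disc_sum_zero (N : ℕ) (hN : 0 < N) (d : ℤ) (hd : ¬ ((N:ℤ) ∣ d)) :
    ∑ j ∈ Finset.range N, Complex.exp ((2 * (Real.pi:ℂ) * Complex.I * d / N) * (j + 1/2)) = 0 := by
  set r : ℂ := Complex.exp (2 * (Real.pi:ℂ) * Complex.I * d / N) with hr
  have hterm : ∀ j : ℕ, Complex.exp ((2 * (Real.pi:ℂ) * Complex.I * d / N) * (j + 1/2))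
      = Complex.exp ((2 * (Real.pi:ℂ) * Complex.I * d / N) * (1/2)) * r ^ j := by
    intro j
    rw [hr, ← Complex.exp_nat_mul, ← Complex.exp_add]
    congr 1
    ring
  simp only [hterm, ← Finset.mul_sum]
  have hrne : r ≠ 1 := by
    intro h1
    rw [hr, Complex.exp_eq_one_iff] at h1
    obtain ⟨n, hn⟩ := h1
    apply hd
    refine ⟨n, ?_⟩
    have hNne : ((N:ℂ)) ≠ 0 := by exact_mod_cast Nat.cast_ne_zero.mpr hN.ne'
    have hpi : (2 * (Real.pi:ℂ) * Complex.I) ≠ 0 := by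
      simp [Real.pi_ne_zero, Complex.I_ne_zero]
    have h2 : (2*(Real.pi:ℂ)*Complex.I) * (d:ℂ) = (2*(Real.pi:ℂ)*Complex.I) * ((N:ℂ)*n) := by
      field_simp at hn
      linear_combination (2*(Real.pi:ℂ)*Complex.I) * hn
    exact_mod_cast mul_left_cancel₀ hpi h2
  have hrN : r ^ N = 1 := by
    rw [hr, ← Complex.exp_nat_mul]
    have hNne : ((N:ℂ)) ≠ 0 := by exact_mod_cast Nat.cast_ne_zero.mpr hN.ne'
    have harg : (N:ℂ) * (2 * (Real.pi:ℂ) * Complex.I * d / N) = d * (2 * Real.pi * Complex.I) := by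
      field_simp
    rw [harg, Complex.exp_int_mul_two_pi_mul_I]
  rw [geom_sum_eq hrne, hrN]
  simp

-- the discrete sample sum
noncomputable def SS (K : ℕ) (L : ℝ) (d : ℤ) : ℂ :=
  ∑ j ∈ Finset.range (2*K+1), EE L d ((j + 1/2) * (L / (2*K+1:ℕ)))

lemma SS_grid (K : ℕ) {L : ℝ} (hL : 0 < L) (d : ℤ) (j : ℕ) :
    EE L d ((j + 1/2) * (L / (2*K+1:ℕ)))
    = Complex.exp ((2 * (Real.pi:ℂ) * Complex.I * d / ((2*K+1:ℕ):ℂ)) * ((j:ℂ) + 1/2)) := by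
  rw [EE]
  congr 1
  have hLne : (L:ℂ) ≠ 0 := Complex.ofReal_ne_zero.mpr hL.ne'
  have hNne : ((2*K+1:ℕ):ℂ) ≠ 0 := Nat.cast_ne_zero.mpr (by omega)
  push_cast
  rw [show (2 * (Real.pi:ℂ) * Complex.I * d * (((j:ℂ) + 1/2) * ((L:ℂ) / (2*(K:ℂ)+1))) / (L:ℂ))
      = (2 * (Real.pi:ℂ) * Complex.I * d * ((j:ℂ) + 1/2) / (2*(K:ℂ)+1)) * ((L:ℂ) / (L:ℂ)) from by ring,
    div_self hLne, mul_one]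
  ring

lemma SS_zero (K : ℕ) {L : ℝ} (hL : 0 < L) (d : ℤ) (hd : ¬ (((2*K+1:ℕ):ℤ) ∣ d)) :
    SS K L d = 0 := by
  rw [SS]
  simp only [SS_grid K hL d]
  exact disc_sum_zero (2*K+1) (Nat.succ_pos _) d hd

lemma SS_bound (K : ℕ) {L : ℝ} (hL : 0 < L) (d : ℤ) :
    ‖SS K L d‖ ≤ (if (((2*K+1:ℕ):ℤ) ∣ d) then ((2*K+1:ℕ):ℝ) else 0) := by
  by_cases hd : (((2*K+1:ℕ):ℤ) ∣ d)
  · rw [if_pos hd]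
    calc ‖SS K L d‖ ≤ ∑ j ∈ Finset.range (2*K+1),
          ‖EE L d ((j + 1/2) * (L / (2*K+1:ℕ)))‖ := norm_sum_le _ _
      _ = ((2*K+1:ℕ):ℝ) := by simp [EE_abs]
  · rw [if_neg hd, SS_zero K hL d hd]
    simp

lemma disc_identity (K : ℕ) {L : ℝ} (hL : 0 < L) (c : ℤ → ℤ → ℂ) :
    ∑ i ∈ Finset.range (2*K+1), ∑ j ∈ Finset.range (2*K+1),
      gg K L c ((i + 1/2) * (L / (2*K+1:ℕ))) ((j + 1/2) * (L / (2*K+1:ℕ)))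
        * (starRingEnd ℂ) (gg K L c ((i + 1/2) * (L / (2*K+1:ℕ))) ((j + 1/2) * (L / (2*K+1:ℕ))))
    = ∑ z ∈ AK K, ∑ z' ∈ AK K,
        Gc K c z * (starRingEnd ℂ) (Gc K c z') * (SS K L (z.1 - z'.1) * SS K L (z.2 - z'.2)) := by
  simp only [gg_mul_conj]
  rw [sum4_comm]
  apply Finset.sum_congr rfl
  intro z _
  apply Finset.sum_congr rfl
  intro z' _
  symm
  rw [SS, SS, Finset.sum_mul_sum, Finset.mul_sum]
  apply Finset.sum_congr rfl
  intro i _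
  rw [Finset.mul_sum]
  apply Finset.sum_congr rfl
  intro j _
  ring

lemma resid_sum_le (K : ℕ) (p : ℤ) (hp : p ∈ tK K) :
    ∑ p' ∈ tK K,
      (if ((2*K+1:ℕ):ℤ) ∣ (p - p') then ((2*K+1:ℕ):ℝ) else 0)
    ≤ 2 * ((2*K+1:ℕ):ℝ) := by
  set N : ℤ := ((2*K+1:ℕ):ℤ) with hN
  have hNval : N = 2*K+1 := by simp [hN]
  simp only [tK, mem_Icc] at hp
  rw [← Finset.sum_filter]
  have hsub : (tK K).filter (fun p' => N ∣ (p - p'))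
      ⊆ (if 0 ≤ p then ({p - N, p} : Finset ℤ) else ({p, p + N} : Finset ℤ)) := by
    intro p' hp'
    simp only [tK, mem_filter, mem_Icc] at hp'
    obtain ⟨⟨h1, h2⟩, k, hk⟩ := hp'
    have hk1 : k ≤ 1 := by nlinarith
    have hk2 : -1 ≤ k := by nlinarith
    interval_cases k
    · split <;> simp_all <;> omega
    · split <;> simp_all <;> omega
    · split <;> simp_all <;> omega
  calc ∑ p' ∈ (tK K).filter (fun p' => N ∣ (p - p')), ((2*K+1:ℕ):ℝ)
      ≤ ∑ _p' ∈ (if 0 ≤ p then ({p - N, p} : Finset ℤ) else ({p, p + N} : Finset ℤ)), ((2*K+1:ℕ):ℝ) := by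
        apply Finset.sum_le_sum_of_subset_of_nonneg hsub
        intro i _ _; positivity
    _ ≤ 2 * ((2*K+1:ℕ):ℝ) := by
        rw [Finset.sum_const, nsmul_eq_mul]
        have hcard : (if 0 ≤ p then ({p - N, p} : Finset ℤ) else ({p, p + N} : Finset ℤ)).card ≤ 2 := by
          split <;> exact (Finset.card_insert_le _ _).trans (by simp)
        apply mul_le_mul_of_nonneg_right _ (by positivity)
        exact_mod_cast hcard

lemma pair_bound {ι : Type*} [DecidableEq ι] (A : Finset ι) (u : ι → ℝ) (w : ι → ι → ℝ) (B : ℝ)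
    (hw : ∀ i j, 0 ≤ w i j) (hsymm : ∀ i j, w i j = w j i)
    (hB : ∀ i ∈ A, ∑ j ∈ A, w i j ≤ B) :
    ∑ i ∈ A, ∑ j ∈ A, u i * u j * w i j ≤ B * ∑ i ∈ A, (u i)^2 := by
  have step1 : ∑ i ∈ A, ∑ j ∈ A, u i * u j * w i j
      ≤ ∑ i ∈ A, ∑ j ∈ A, ((u i)^2 + (u j)^2)/2 * w i j := by
    apply Finset.sum_le_sum; intro i _
    apply Finset.sum_le_sum; intro j _
    apply mul_le_mul_of_nonneg_right _ (hw i j)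
    nlinarith [sq_nonneg (u i - u j)]
  have step2 : ∑ i ∈ A, ∑ j ∈ A, ((u i)^2 + (u j)^2)/2 * w i j
      = ∑ i ∈ A, (u i)^2 * ∑ j ∈ A, w i j := by
    have hsplit : ∀ i j : ι, ((u i)^2 + (u j)^2)/2 * w i j
        = (u i)^2/2 * w i j + (u j)^2/2 * w i j := by intro i j; ring
    simp only [hsplit, Finset.sum_add_distrib]
    rw [Finset.sum_comm (f := fun i j => (u j)^2/2 * w i j)]
    have hswap : ∀ i ∈ A, ∑ j ∈ A, (u i)^2/2 * w j i = ∑ j ∈ A, (u i)^2/2 * w i j := by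
      intro i _; apply Finset.sum_congr rfl; intro j _; rw [hsymm i j]
    rw [Finset.sum_congr rfl hswap, ← Finset.sum_add_distrib]
    apply Finset.sum_congr rfl; intro i _
    rw [← Finset.sum_add_distrib, Finset.mul_sum]
    apply Finset.sum_congr rfl; intro j _; ring
  have step3 : ∑ i ∈ A, (u i)^2 * ∑ j ∈ A, w i j ≤ ∑ i ∈ A, (u i)^2 * B := by
    apply Finset.sum_le_sum; intro i hi
    exact mul_le_mul_of_nonneg_left (hB i hi) (sq_nonneg _)
  calc ∑ i ∈ A, ∑ j ∈ A, u i * u j * w i j ≤ _ := step1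
    _ = _ := step2
    _ ≤ ∑ i ∈ A, (u i)^2 * B := step3
    _ = B * ∑ i ∈ A, (u i)^2 := by rw [Finset.mul_sum]; apply Finset.sum_congr rfl; intros; ring

lemma disc_bound (K : ℕ) {L : ℝ} (hL : 0 < L) (c : ℤ → ℤ → ℂ) :
    ‖∑ z ∈ AK K, ∑ z' ∈ AK K,
        Gc K c z * (starRingEnd ℂ) (Gc K c z') * (SS K L (z.1 - z'.1) * SS K L (z.2 - z'.2))‖
    ≤ (2 * ((2*K+1:ℕ):ℝ))^2 * ∑ z ∈ AK K, (‖Gc K c z‖)^2 := by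
  set T : ℤ → ℝ := fun d => if (((2*K+1:ℕ):ℤ) ∣ d) then ((2*K+1:ℕ):ℝ) else 0 with hT
  have hT0 : ∀ d, 0 ≤ T d := by
    intro d; rw [hT]; dsimp only; split <;> positivity
  have habs : ∀ d, ‖SS K L d‖ ≤ T d := fun d => SS_bound K hL d
  calc ‖∑ z ∈ AK K, ∑ z' ∈ AK K,
        Gc K c z * (starRingEnd ℂ) (Gc K c z') * (SS K L (z.1 - z'.1) * SS K L (z.2 - z'.2))‖
      ≤ ∑ z ∈ AK K, ‖∑ z' ∈ AK K,
          Gc K c z * (starRingEnd ℂ) (Gc K c z') * (SS K L (z.1 - z'.1) * SS K L (z.2 - z'.2))‖ :=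
        norm_sum_le _ _
    _ ≤ ∑ z ∈ AK K, ∑ z' ∈ AK K, ‖Gc K c z * (starRingEnd ℂ) (Gc K c z') * (SS K L (z.1 - z'.1) * SS K L (z.2 - z'.2))‖ :=
        Finset.sum_le_sum (fun z _ => norm_sum_le _ _)
    _ = ∑ z ∈ AK K, ∑ z' ∈ AK K, ‖Gc K c z‖ * ‖Gc K c z'‖
          * (‖SS K L (z.1 - z'.1)‖ * ‖SS K L (z.2 - z'.2)‖) := by
        apply Finset.sum_congr rfl; intro z _
        apply Finset.sum_congr rfl; intro z' _
        simp [map_mul, Complex.norm_conj]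
    _ ≤ ∑ z ∈ AK K, ∑ z' ∈ AK K, ‖Gc K c z‖ * ‖Gc K c z'‖
          * (T (z.1 - z'.1) * T (z.2 - z'.2)) := by
        apply Finset.sum_le_sum; intro z _
        apply Finset.sum_le_sum; intro z' _
        apply mul_le_mul_of_nonneg_left _ (by positivity)
        exact mul_le_mul (habs _) (habs _) (norm_nonneg _) (hT0 _)
    _ ≤ (2 * ((2*K+1:ℕ):ℝ))^2 * ∑ z ∈ AK K, (‖Gc K c z‖)^2 := by
        apply pair_bound (A := AK K) (u := fun z => ‖Gc K c z‖)
            (w := fun z z' => T (z.1 - z'.1) * T (z.2 - z'.2))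
        · intro i j; exact mul_nonneg (hT0 _) (hT0 _)
        · intro i j
          have hTsymm : ∀ a b : ℤ, T (a - b) = T (b - a) := by
            intro a b; rw [hT]; dsimp only
            exact if_congr dvd_sub_comm rfl rfl
          rw [hTsymm i.1 j.1, hTsymm i.2 j.2]
        · intro z hz
          rw [AK] at hz ⊢
          rw [Finset.sum_product]
          have hz1 : z.1 ∈ tK K := (Finset.mem_product.mp hz).1
          have hz2 : z.2 ∈ tK K := (Finset.mem_product.mp hz).2
          calc ∑ p' ∈ tK K, ∑ q' ∈ tK K, T (z.1 - p') * T (z.2 - q')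
              = (∑ p' ∈ tK K, T (z.1 - p')) * (∑ q' ∈ tK K, T (z.2 - q')) := by
                rw [Finset.sum_mul_sum]
            _ ≤ (2 * ((2*K+1:ℕ):ℝ)) * (2 * ((2*K+1:ℕ):ℝ)) := by
                apply mul_le_mul (resid_sum_le K z.1 hz1) (resid_sum_le K z.2 hz2)
                  (Finset.sum_nonneg (fun i _ => hT0 _)) (by positivity)
            _ = (2 * ((2*K+1:ℕ):ℝ))^2 := by ring

end AuxLemmasForL4

/-- Lemma A.2 (p = 4): the discrete ℓ⁴ norm of a trigonometric polynomial of
degree ≤ K, sampled at the uniform N×N cell-centered grid with N = 2K+1, is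
bounded by √2 times its continuous L⁴ norm on [0,L]². -/
theorem discrete_l4_le_continuous_L4 (K : ℕ) (L : ℝ) (hL : 0 < L)
    (c : ℤ → ℤ → ℂ) (f : ℝ → ℝ → ℂ)
    (hf : ∀ x y : ℝ, f x y =
      ∑ ℓ ∈ Finset.Icc (-(K:ℤ)) K, ∑ m ∈ Finset.Icc (-(K:ℤ)) K,
        c ℓ m * Complex.exp (2 * Real.pi * Complex.I * (ℓ * x + m * y) / L))
    (hreal : ∀ x y : ℝ, (f x y).im = 0) :
    let N : ℕ := 2 * K + 1
    let h : ℝ := L / N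
    (h^2 * ∑ i ∈ Finset.range N, ∑ j ∈ Finset.range N,
        ‖f ((i + 1/2) * h) ((j + 1/2) * h)‖^4) ^ ((1:ℝ)/4)
      ≤ Real.sqrt 2 *
        (∫ x in (0:ℝ)..L, ∫ y in (0:ℝ)..L, ‖f x y‖^4) ^ ((1:ℝ)/4) := by
  intro N h
  have hN : N = 2*K+1 := rfl
  have hh : h = L / ((2*K+1:ℕ):ℝ) := rfl
  simp only [hN, hh]
  have hfg : ∀ x y : ℝ, f x y ^ 2 = gg K L c x y := sq_eq_gg K L c f hf
  have habs4 : ∀ x y : ℝ, (‖f x y‖)^4 = Complex.normSq (gg K L c x y) := by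
    intro x y
    calc (‖f x y‖)^4 = ((‖f x y‖)^2)^2 := by ring
      _ = (‖f x y ^ 2‖)^2 := by rw [norm_pow]
      _ = Complex.normSq (f x y ^ 2) := Complex.sq_norm _
      _ = Complex.normSq (gg K L c x y) := by rw [hfg]
  -- discrete sum as abs of a complex quantity
  have hr0 : (0:ℝ) ≤ ∑ i ∈ Finset.range (2*K+1), ∑ j ∈ Finset.range (2*K+1),
      (‖f ((i + 1/2) * (L / ((2*K+1:ℕ):ℝ))) ((j + 1/2) * (L / ((2*K+1:ℕ):ℝ)))‖)^4 :=
    Finset.sum_nonneg fun _ _ => Finset.sum_nonneg fun _ _ => by positivity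
  have h1 : ((∑ i ∈ Finset.range (2*K+1), ∑ j ∈ Finset.range (2*K+1),
      (‖f ((i + 1/2) * (L / ((2*K+1:ℕ):ℝ))) ((j + 1/2) * (L / ((2*K+1:ℕ):ℝ)))‖)^4 : ℝ) : ℂ)
      = ∑ z ∈ AK K, ∑ z' ∈ AK K,
        Gc K c z * (starRingEnd ℂ) (Gc K c z') * (SS K L (z.1 - z'.1) * SS K L (z.2 - z'.2)) := by
    rw [← disc_identity K hL c]
    rw [Complex.ofReal_sum]
    apply Finset.sum_congr rfl
    intro i _
    rw [Complex.ofReal_sum]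
    apply Finset.sum_congr rfl
    intro j _
    rw [habs4]
    exact (Complex.mul_conj _).symm
  have hDabs : ∑ i ∈ Finset.range (2*K+1), ∑ j ∈ Finset.range (2*K+1),
      (‖f ((i + 1/2) * (L / ((2*K+1:ℕ):ℝ))) ((j + 1/2) * (L / ((2*K+1:ℕ):ℝ)))‖)^4
      = ‖∑ z ∈ AK K, ∑ z' ∈ AK K,
        Gc K c z * (starRingEnd ℂ) (Gc K c z') * (SS K L (z.1 - z'.1) * SS K L (z.2 - z'.2))‖ := by
    rw [← h1, Complex.norm_real, Real.norm_of_nonneg hr0]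
  have hDb : ∑ i ∈ Finset.range (2*K+1), ∑ j ∈ Finset.range (2*K+1),
      (‖f ((i + 1/2) * (L / ((2*K+1:ℕ):ℝ))) ((j + 1/2) * (L / ((2*K+1:ℕ):ℝ)))‖)^4
      ≤ (2 * ((2*K+1:ℕ):ℝ))^2 * ∑ z ∈ AK K, (‖Gc K c z‖)^2 := by
    rw [hDabs]; exact disc_bound K hL c
  have hsq : ∑ z ∈ AK K, (‖Gc K c z‖)^2 = ∑ z ∈ AK K, Complex.normSq (Gc K c z) := by
    apply Finset.sum_congr rfl; intro z _; exact Complex.sq_norm _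
  have hI : (∫ x in (0:ℝ)..L, ∫ y in (0:ℝ)..L, (‖f x y‖)^4)
      = L^2 * ∑ z ∈ AK K, Complex.normSq (Gc K c z) := by
    simp only [habs4]
    exact cont_identity K hL c
  have hsum0 : (0:ℝ) ≤ ∑ z ∈ AK K, Complex.normSq (Gc K c z) :=
    Finset.sum_nonneg fun z _ => Complex.normSq_nonneg _
  have hI0 : (0:ℝ) ≤ ∫ x in (0:ℝ)..L, ∫ y in (0:ℝ)..L, (‖f x y‖)^4 := by
    rw [hI]; positivity
  have hNR : (0:ℝ) < ((2*K+1:ℕ):ℝ) := by positivity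
  have hDI : (L / ((2*K+1:ℕ):ℝ))^2 * (∑ i ∈ Finset.range (2*K+1), ∑ j ∈ Finset.range (2*K+1),
      (‖f ((i + 1/2) * (L / ((2*K+1:ℕ):ℝ))) ((j + 1/2) * (L / ((2*K+1:ℕ):ℝ)))‖)^4)
      ≤ 4 * ∫ x in (0:ℝ)..L, ∫ y in (0:ℝ)..L, (‖f x y‖)^4 := by
    calc (L / ((2*K+1:ℕ):ℝ))^2 * (∑ i ∈ Finset.range (2*K+1), ∑ j ∈ Finset.range (2*K+1),
        (‖f ((i + 1/2) * (L / ((2*K+1:ℕ):ℝ))) ((j + 1/2) * (L / ((2*K+1:ℕ):ℝ)))‖)^4)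
        ≤ (L / ((2*K+1:ℕ):ℝ))^2 * ((2 * ((2*K+1:ℕ):ℝ))^2 * ∑ z ∈ AK K, (‖Gc K c z‖)^2) :=
          mul_le_mul_of_nonneg_left hDb (by positivity)
      _ = 4 * (L^2 * ∑ z ∈ AK K, Complex.normSq (Gc K c z)) := by
          rw [hsq]
          field_simp
          ring
      _ = 4 * ∫ x in (0:ℝ)..L, ∫ y in (0:ℝ)..L, (‖f x y‖)^4 := by rw [hI]
  have hbase0 : (0:ℝ) ≤ (L / ((2*K+1:ℕ):ℝ))^2 * (∑ i ∈ Finset.range (2*K+1), ∑ j ∈ Finset.range (2*K+1),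
      (‖f ((i + 1/2) * (L / ((2*K+1:ℕ):ℝ))) ((j + 1/2) * (L / ((2*K+1:ℕ):ℝ)))‖)^4) :=
    mul_nonneg (sq_nonneg _) hr0
  have hfourth : ((4:ℝ))^((1:ℝ)/4) = Real.sqrt 2 := by
    rw [Real.sqrt_eq_rpow]
    rw [show (4:ℝ) = (2:ℝ)^(2:ℕ) by norm_num, ← Real.rpow_natCast (2:ℝ) 2,
      ← Real.rpow_mul (by norm_num : (0:ℝ) ≤ 2)]
    norm_num
  calc ((L / ((2*K+1:ℕ):ℝ))^2 * (∑ i ∈ Finset.range (2*K+1), ∑ j ∈ Finset.range (2*K+1),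
        (‖f ((i + 1/2) * (L / ((2*K+1:ℕ):ℝ))) ((j + 1/2) * (L / ((2*K+1:ℕ):ℝ)))‖)^4)) ^ ((1:ℝ)/4)
      ≤ (4 * ∫ x in (0:ℝ)..L, ∫ y in (0:ℝ)..L, (‖f x y‖)^4) ^ ((1:ℝ)/4) :=
        Real.rpow_le_rpow hbase0 hDI (by norm_num)
    _ = ((4:ℝ))^((1:ℝ)/4) * (∫ x in (0:ℝ)..L, ∫ y in (0:ℝ)..L, (‖f x y‖)^4) ^ ((1:ℝ)/4) :=
        Real.mul_rpow (by norm_num) hI0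
    _ = Real.sqrt 2 * (∫ x in (0:ℝ)..L, ∫ y in (0:ℝ)..L, (‖f x y‖)^4) ^ ((1:ℝ)/4) := by
        rw [hfourth]
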